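/- arXiv:1612.03340 — 6 statements merged into one kernel-verified Lean document; each statement's English description precedes it below -/
import Mathlib

section
/- For all integers m ≥ 1 and n ≥ 1, (-1)^m · Σ_{k=0}^{m} C(m,k) · B_{n+k} = (-1)^n · Σ_{k=0}^{n} C(n,k) · B_{m+k}, where C(a,b) denotes the binomial coefficient. -/
open Finset

private def carlitzS (m n : ℕ) : ℚ :=
  ∑ k ∈ Finset.range (m + 1), (m.choose k : ℚ) * bernoulli (n + k)

private lemma carlitzS_rec (m n : ℕ) :
    carlitzS (m + 1) n = carlitzS m n + carlitzS m (n + 1) := by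
  unfold carlitzS
  rw [sum_range_succ' (fun k => ((m + 1).choose k : ℚ) * bernoulli (n + k))]
  have h : ∀ k, ((m + 1).choose (k + 1) : ℚ) = (m.choose k : ℚ) + (m.choose (k + 1) : ℚ) := by
    intro k; rw [Nat.choose_succ_succ]; push_cast; ring
  simp_rw [h, add_mul, sum_add_distrib]
  have h1 : ∑ k ∈ range (m + 1), (m.choose k : ℚ) * bernoulli (n + (k + 1)) =
      ∑ k ∈ range (m + 1), (m.choose k : ℚ) * bernoulli (n + 1 + k) := by
    apply sum_congr rfl; intro k _; ring_nf
  have h2 : ∑ k ∈ range (m + 1), (m.choose (k + 1) : ℚ) * bernoulli (n + (k + 1)) +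
      ((m + 1).choose 0 : ℚ) * bernoulli (n + 0) =
      ∑ k ∈ range (m + 1), (m.choose k : ℚ) * bernoulli (n + k) := by
    rw [sum_range_succ, sum_range_succ' (fun k => (m.choose k : ℚ) * bernoulli (n + k)) m]
    simp [Nat.choose_succ_self]
  linarith [h1, h2]

private lemma carlitzS_zero_right (n : ℕ) : carlitzS n 0 = (-1) ^ n * bernoulli n := by
  rw [← bernoulli'_eq_bernoulli]
  unfold carlitzS
  simp only [zero_add]
  rw [sum_range_succ, sum_bernoulli, Nat.choose_self, Nat.cast_one, one_mul]
  by_cases h : n = 1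
  · subst h; norm_num
  · rw [if_neg h, zero_add, bernoulli_eq_bernoulli'_of_ne_one h]

private lemma carlitz_main : ∀ m n : ℕ,
    (-1 : ℚ) ^ m * carlitzS m n = (-1 : ℚ) ^ n * carlitzS n m := by
  intro m
  induction m with
  | zero =>
    intro n
    have : carlitzS 0 n = bernoulli n := by unfold carlitzS; simp
    rw [this, carlitzS_zero_right, pow_zero, one_mul, ← mul_assoc, ← mul_pow]
    norm_num
  | succ m ih =>
    intro n
    rw [carlitzS_rec]
    have h1 := ih n
    have h2 := ih (n + 1)
    have h3 : carlitzS n (m + 1) = carlitzS (n + 1) m - carlitzS n m := by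
      rw [carlitzS_rec]; ring
    rw [pow_succ] at h2
    rw [h3, pow_succ]
    linear_combination -h1 - h2

/-- Carlitz's 1971 problem (Pearl 1): for `m, n ≥ 1`,
`(-1)^m * ∑_{k=0}^{m} C(m,k) B_{n+k} = (-1)^n * ∑_{k=0}^{n} C(n,k) B_{m+k}`. -/
theorem carlitz_identity (m n : ℕ) (hm : 1 ≤ m) (hn : 1 ≤ n) :
    (-1 : ℚ) ^ m * ∑ k ∈ Finset.range (m + 1), (m.choose k : ℚ) * bernoulli (n + k) =
      (-1 : ℚ) ^ n * ∑ k ∈ Finset.range (n + 1), (n.choose k : ℚ) * bernoulli (m + k) := by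
  exact carlitz_main m n
end

section
/- For all integers m ≥ 0, n ≥ 0 and q ≥ 0, (-1)^m · Σ_{k=0}^{m+q} C(m+q,k) · C(n+q+k,q) · B_{n+k} = (-1)^{n+q} · Σ_{k=0}^{n+q} C(n+q,k) · C(m+q+k,q) · B_{m+k}, where C(a,b) denotes the binomial coefficient. -/
namespace BGaux
open Polynomial Finset

noncomputable def Lb : ℚ[X] →ₗ[ℚ] ℚ :=
  Polynomial.lsum (fun n => LinearMap.toSpanSingleton ℚ ℚ (_root_.bernoulli n))

lemma Lb_monomial (n : ℕ) (a : ℚ) : Lb (monomial n a) = a * _root_.bernoulli n := by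
  simp [Lb, Polynomial.lsum_apply, Polynomial.sum_monomial_index,
    LinearMap.toSpanSingleton_apply, smul_eq_mul]

lemma Lb_X_pow (n : ℕ) : Lb (X ^ n) = _root_.bernoulli n := by
  rw [← Polynomial.monomial_one_right_eq_X_pow, Lb_monomial, one_mul]

lemma core (k : ℕ) :
    ∑ j ∈ range (k + 1), (k.choose j : ℚ) * _root_.bernoulli j = (-1) ^ k * _root_.bernoulli k := by
  rw [Finset.sum_range_succ, _root_.sum_bernoulli, ← bernoulli'_eq_bernoulli, Nat.choose_self]
  rcases eq_or_ne k 1 with rfl | hk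
  · norm_num [bernoulli'_one, _root_.bernoulli_one]
  · rw [if_neg hk, bernoulli_eq_bernoulli'_of_ne_one hk]; ring

lemma Lb_one_add_X_pow (k : ℕ) : Lb ((1 + X : ℚ[X]) ^ k) = (-1) ^ k * _root_.bernoulli k := by
  have h : ((1 + X : ℚ[X])) ^ k = ∑ j ∈ range (k + 1), (k.choose j : ℚ) • X ^ j := by
    rw [add_comm, add_pow]
    refine Finset.sum_congr rfl fun j hj => ?_
    rw [one_pow, mul_one, Polynomial.smul_eq_C_mul, C_eq_natCast, mul_comm]
  rw [h, map_sum, ← core]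
  refine Finset.sum_congr rfl fun j hj => ?_
  rw [map_smul, Lb_X_pow, smul_eq_mul]

lemma Lb_reflect (p : ℚ[X]) : Lb (p.comp (-1 - X)) = Lb p := by
  induction p using Polynomial.induction_on' with
  | add p q hp hq => rw [add_comp, map_add, map_add, hp, hq]
  | monomial n a =>
    have h1 : (-1 - X : ℚ[X]) = -(1 + X) := by ring
    rw [← Polynomial.smul_X_eq_monomial, smul_comp, X_pow_comp, map_smul, map_smul,
      Lb_X_pow, h1, neg_pow]
    congr 1
    have h2 : ((-1 : ℚ[X])) ^ n * (1 + X) ^ n = ((-1 : ℚ) ^ n) • ((1 + X : ℚ[X]) ^ n) := by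
      rw [Polynomial.smul_eq_C_mul, map_pow, map_neg, map_one]
    rw [h2, map_smul, Lb_one_add_X_pow, smul_eq_mul, ← mul_assoc, ← mul_pow]
    norm_num

lemma iter_deriv_reflect (q : ℕ) (p : ℚ[X]) :
    derivative^[q] (p.comp (-1 - X)) = (-1 : ℚ) ^ q • ((derivative^[q] p).comp (-1 - X)) := by
  induction q generalizing p with
  | zero => simp
  | succ q ih =>
    rw [Function.iterate_succ_apply, Polynomial.derivative_comp, Function.iterate_succ_apply]
    have hd : derivative (-1 - X : ℚ[X]) = -1 := by
      simp [derivative_sub]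
    rw [hd]
    have : ((-1 : ℚ[X]) * (derivative p).comp (-1 - X)) = ((-1:ℚ) • ((derivative p).comp (-1-X))) := by
      rw [Polynomial.smul_eq_C_mul, map_neg, map_one]
    rw [this, Polynomial.iterate_derivative_smul, ih, smul_smul]
    congr 1
    rw [pow_succ]
    ring

lemma hasse_reflect (q : ℕ) (p : ℚ[X]) :
    hasseDeriv q (p.comp (-1 - X)) = (-1 : ℚ) ^ q • ((hasseDeriv q p).comp (-1 - X)) := by
  have hfac : ∀ r : ℚ[X], derivative^[q] r = Nat.factorial q • (hasseDeriv q r) := by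
    intro r
    rw [← Polynomial.factorial_smul_hasseDeriv]
    rfl
  have hq : ((Nat.factorial q : ℚ)) ≠ 0 := Nat.cast_ne_zero.mpr (Nat.factorial_ne_zero q)
  apply smul_right_injective ℚ[X] hq
  show (Nat.factorial q : ℚ) • _ = (Nat.factorial q : ℚ) • _
  rw [Nat.cast_smul_eq_nsmul, Nat.cast_smul_eq_nsmul, ← hfac, iter_deriv_reflect, hfac,
    Polynomial.smul_comp]
  exact smul_comm _ _ _

lemma expand_poly (a b q : ℕ) :
    (X ^ (b + q) * (1 + X) ^ (a + q) : ℚ[X]) =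
      ∑ k ∈ range (a + q + 1), monomial (b + q + k) ((a + q).choose k : ℚ) := by
  rw [add_comm (1 : ℚ[X]) X, add_pow, Finset.mul_sum]
  refine Finset.sum_congr rfl fun k hk => ?_
  rw [one_pow, mul_one, ← C_eq_natCast, ← Polynomial.C_mul_X_pow_eq_monomial, pow_add]
  ring

lemma Lb_hasse_expand (a b q : ℕ) :
    Lb (hasseDeriv q (X ^ (b + q) * (1 + X) ^ (a + q))) =
      ∑ k ∈ range (a + q + 1),
        ((a + q).choose k : ℚ) * ((b + q + k).choose q : ℚ) * _root_.bernoulli (b + k) := by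
  rw [expand_poly, map_sum, map_sum]
  refine Finset.sum_congr rfl fun k hk => ?_
  rw [Polynomial.hasseDeriv_monomial]
  have h1 : b + q + k - q = b + k := by omega
  have h2 : (b + q + k).choose q = (b + q + k).choose q := rfl
  rw [h1, Lb_monomial]
  ring

lemma comp_poly (a b q : ℕ) :
    (X ^ (b + q) * (1 + X) ^ (a + q) : ℚ[X]).comp (-1 - X) =
      ((-1 : ℚ) ^ (a + b)) • (X ^ (a + q) * (1 + X) ^ (b + q)) := by
  rw [mul_comp, pow_comp, pow_comp, X_comp, add_comp, one_comp, X_comp]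
  have h1 : (-1 - X : ℚ[X]) = -(1 + X) := by ring
  have h2 : (1 + -(1 + X) : ℚ[X]) = -X := by ring
  rw [h1, h2, show ((-(1 + X) : ℚ[X])) ^ (b + q) = (-1) ^ (b + q) * (1 + X) ^ (b + q) from neg_pow _ _,
    show ((-X : ℚ[X])) ^ (a + q) = (-1) ^ (a + q) * X ^ (a + q) from neg_pow _ _, Polynomial.smul_eq_C_mul, map_pow, map_neg, map_one]
  have h3 : ((-1 : ℚ[X])) ^ (b + q) * ((-1) ^ (a + q)) = (-1) ^ (a + b) := by
    rw [← pow_add, show b + q + (a + q) = (a + b) + 2 * q by ring, pow_add, pow_mul,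
      neg_one_sq, one_pow, mul_one]
  calc ((-1 : ℚ[X])) ^ (b + q) * (1 + X) ^ (b + q) * ((-1) ^ (a + q) * X ^ (a + q))
      = ((-1 : ℚ[X])) ^ (b + q) * ((-1) ^ (a + q)) * (X ^ (a + q) * (1 + X) ^ (b + q)) := by ring
    _ = _ := by rw [h3]

theorem bencherif_garici_aux (m n q : ℕ) :
    (-1 : ℚ) ^ m *
        ∑ k ∈ Finset.range (m + q + 1),
          ((m + q).choose k : ℚ) * ((n + q + k).choose q : ℚ) * _root_.bernoulli (n + k) =
      (-1 : ℚ) ^ (n + q) *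
        ∑ k ∈ Finset.range (n + q + 1),
          ((n + q).choose k : ℚ) * ((m + q + k).choose q : ℚ) * _root_.bernoulli (m + k) := by
  rw [← Lb_hasse_expand m n q, ← Lb_hasse_expand n m q]
  set f : ℚ[X] := X ^ (n + q) * (1 + X) ^ (m + q) with hf
  have hg : (X ^ (m + q) * (1 + X) ^ (n + q) : ℚ[X]) =
      ((-1 : ℚ) ^ (m + n)) • (f.comp (-1 - X)) := by
    rw [comp_poly m n q, smul_smul, ← mul_pow]
    norm_num
  rw [hg, map_smul, map_smul, hasse_reflect, map_smul, Lb_reflect, smul_eq_mul, smul_eq_mul,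
    ← mul_assoc, ← mul_assoc, ← pow_add, ← pow_add,
    show n + q + (m + n) + q = m + 2 * (n + q) by ring, pow_add, pow_mul, neg_one_sq, one_pow,
    mul_one]

end BGaux

/-- The Benchérif–Garici identity: for all `m, n, q ≥ 0`,
`(-1)^m ∑_{k=0}^{m+q} C(m+q,k) C(n+q+k,q) B_{n+k}
  = (-1)^{n+q} ∑_{k=0}^{n+q} C(n+q,k) C(m+q+k,q) B_{m+k}`. -/
theorem bencherif_garici_identity (m n q : ℕ) :
    (-1 : ℚ) ^ m *
        ∑ k ∈ Finset.range (m + q + 1),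
          ((m + q).choose k : ℚ) * ((n + q + k).choose q : ℚ) * bernoulli (n + k) =
      (-1 : ℚ) ^ (n + q) *
        ∑ k ∈ Finset.range (n + q + 1),
          ((n + q).choose k : ℚ) * ((m + q + k).choose q : ℚ) * bernoulli (m + k) :=
  BGaux.bencherif_garici_aux m n q
end

section
/- Let P ∈ ℚ[X] be a polynomial, written P(X) = Σ_k a_k X^k, such that P(-1/2 + X) + P(-1/2 - X) = 0 as polynomials in ℚ[X]. Then Σ_k a_k · B_k = 0, where the sum ranges over all k with a_k the k-th coefficient of P. -/
open Polynomial

noncomputable def Lb : ℚ[X] →ₗ[ℚ] ℚ :=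
  Polynomial.lsum fun k => LinearMap.toSpanSingleton ℚ ℚ (_root_.bernoulli k)

lemma Lb_apply (P : ℚ[X]) : Lb P = P.sum fun k a => a * _root_.bernoulli k := by
  simp [Lb, Polynomial.lsum_apply, LinearMap.toSpanSingleton_apply, smul_eq_mul]

lemma Lb_monomial (n : ℕ) (c : ℚ) : Lb (monomial n c) = c * _root_.bernoulli n := by
  rw [Lb_apply, Polynomial.sum_monomial_index]
  simp

lemma Lb_X_pow (n : ℕ) : Lb ((X : ℚ[X]) ^ n) = _root_.bernoulli n := by
  rw [X_pow_eq_monomial, Lb_monomial, one_mul]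

lemma neg_one_sub_X_pow (n : ℕ) :
    ((-1 - X : ℚ[X]) ^ n) =
      ∑ k ∈ Finset.range (n + 1), ((-1 : ℚ) ^ n * (n.choose k : ℚ)) • (X : ℚ[X]) ^ k := by
  have h : (-1 - X : ℚ[X]) = (-1) * (X + 1) := by ring
  rw [h, mul_pow, add_pow, Finset.mul_sum]
  refine Finset.sum_congr rfl fun k _ => ?_
  simp [Algebra.smul_def, algebraMap_eq]
  ring

lemma Lb_neg_one_sub_X_pow (n : ℕ) :
    Lb ((-1 - X : ℚ[X]) ^ n) = _root_.bernoulli n := by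
  rw [neg_one_sub_X_pow, map_sum]
  simp only [map_smul, Lb_X_pow, smul_eq_mul]
  have : ∑ k ∈ Finset.range (n + 1),
      (-1 : ℚ) ^ n * (n.choose k : ℚ) * _root_.bernoulli k
      = (-1 : ℚ) ^ n * ∑ k ∈ Finset.range (n + 1), (n.choose k : ℚ) * _root_.bernoulli k := by
    rw [Finset.mul_sum]; refine Finset.sum_congr rfl fun k _ => by ring
  rw [this, Finset.sum_range_succ, _root_.sum_bernoulli, Nat.choose_self]
  by_cases h1 : n = 1
  · subst h1; norm_num
  · rw [if_neg h1]
    rcases Nat.even_or_odd n with he | ho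
    · simp [he.neg_one_pow]
    · have hz : _root_.bernoulli n = 0 := by
        rw [bernoulli_eq_bernoulli'_of_ne_one h1]
        exact bernoulli'_eq_zero_of_odd ho (by rcases ho with ⟨m, rfl⟩; omega)
      simp [hz]

lemma Lb_comp (P : ℚ[X]) : Lb (P.comp (-1 - X)) = Lb P := by
  induction P using Polynomial.induction_on' with
  | add p q hp hq => rw [add_comp, map_add, map_add, hp, hq]
  | monomial n c =>
      rw [monomial_comp, Lb_monomial, ← smul_eq_C_mul, map_smul, Lb_neg_one_sub_X_pow,
        smul_eq_mul]

/-- If `P ∈ ℚ[X]` satisfies `P(-1/2 + X) + P(-1/2 - X) = 0`, then the umbral evaluation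
`∑_k a_k B_k` of `P = ∑_k a_k X^k` at the Bernoulli numbers vanishes. -/
theorem umbral_eval_vanishes (P : ℚ[X])
    (hP : P.comp (C (-1/2 : ℚ) + X) + P.comp (C (-1/2 : ℚ) - X) = 0) :
    ∑ k ∈ Finset.range (P.natDegree + 1), P.coeff k * _root_.bernoulli k = 0 := by
  have key : P + P.comp (-1 - X) = 0 := by
    have h := congrArg (fun Q : ℚ[X] => Q.comp (C (1/2 : ℚ) + X)) hP
    simp only [add_comp, sub_comp, C_comp, X_comp, comp_assoc, zero_comp] at h
    have e1 : C (-1/2 : ℚ) + (C (1/2 : ℚ) + X) = X := by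
      rw [← add_assoc, ← C_add]
      norm_num
    have e2 : C (-1/2 : ℚ) - (C (1/2 : ℚ) + X) = -1 - X := by
      rw [sub_add_eq_sub_sub, ← C_sub, show (-1/2 - 1/2 : ℚ) = -1 by norm_num]
      simp
    rwa [e1, e2, comp_X] at h
  have h0 : Lb P + Lb P = 0 := by
    have h := congrArg Lb key
    rwa [map_add, Lb_comp, map_zero] at h
  have hL : Lb P = 0 := by linarith
  rw [Lb_apply, Polynomial.sum_over_range P (f := fun k a => a * _root_.bernoulli k) (fun n => zero_mul _)] at hL
  exact hL
end

section
/- For every integer n ≥ 1, Σ_{k=0}^{n} C(n,k) · B_k / (n + 2 - k) = B_{n+1} / (n+1), where the sum and the quotients are taken in ℚ and C(n,k) denotes the binomial coefficient. -/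
open Finset

/-- Apostol's identity (Pearl 2): for `n ≥ 1`,
`∑_{k=0}^{n} C(n,k) B_k / (n + 2 - k) = B_{n+1} / (n+1)`. -/
theorem apostol_identity (n : ℕ) (hn : 1 ≤ n) :
    ∑ k ∈ Finset.range (n + 1), (n.choose k : ℚ) * bernoulli k / ((n : ℚ) + 2 - k) =
      bernoulli (n + 1) / ((n : ℚ) + 1) := by
  have hn1 : ((n : ℚ) + 1) ≠ 0 := by positivity
  have hn2 : ((n : ℚ) + 2) ≠ 0 := by positivity
  -- Step 1: rewrite each term
  have key : ∀ k ∈ range (n + 1),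
      (n.choose k : ℚ) * bernoulli k / ((n : ℚ) + 2 - k)
        = ((n+2).choose k : ℚ) * bernoulli k * (((n : ℚ) + 1 - k)) / (((n:ℚ)+1)*((n:ℚ)+2)) := by
    intro k hk
    rw [mem_range] at hk
    have hkn : k ≤ n := by omega
    have hd : ((n : ℚ) + 2 - k) ≠ 0 := by
      have : (k : ℚ) ≤ n := by exact_mod_cast Nat.cast_le.mpr hkn
      linarith
    have h1 : (n.choose k : ℚ) * ((n:ℚ) + 1) = ((n+1).choose k : ℚ) * ((n:ℚ) + 1 - k) := by
      have := congrArg (fun m : ℕ => (m : ℚ)) (Nat.choose_mul_succ_eq n k)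
      push_cast [Nat.cast_sub (by omega : k ≤ n + 1)] at this
      linarith [this]
    have h2 : ((n+1).choose k : ℚ) * ((n:ℚ) + 2) = ((n+2).choose k : ℚ) * ((n:ℚ) + 2 - k) := by
      have := congrArg (fun m : ℕ => (m : ℚ)) (Nat.choose_mul_succ_eq (n+1) k)
      push_cast [Nat.cast_sub (by omega : k ≤ n + 2)] at this
      linarith [this]
    rw [div_eq_div_iff hd (by positivity)]
    linear_combination (bernoulli k * ((n:ℚ)+2)) * h1 + (bernoulli k * ((n:ℚ)+1-(k:ℚ))) * h2
  rw [Finset.sum_congr rfl key, ← Finset.sum_div]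
  -- Step 2: compute the numerator sum
  have T1 : ∑ k ∈ range (n + 1), ((n+2).choose k : ℚ) * bernoulli k * ((n : ℚ) + 2 - k) = 0 := by
    have e : ∀ k ∈ range (n + 1),
        ((n+2).choose k : ℚ) * bernoulli k * ((n : ℚ) + 2 - k)
          = ((n:ℚ)+2) * (((n+1).choose k : ℚ) * bernoulli k) := by
      intro k hk
      rw [mem_range] at hk
      have h2 : ((n+1).choose k : ℚ) * ((n:ℚ) + 2) = ((n+2).choose k : ℚ) * ((n:ℚ) + 2 - k) := by
        have := congrArg (fun m : ℕ => (m : ℚ)) (Nat.choose_mul_succ_eq (n+1) k)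
        push_cast [Nat.cast_sub (by omega : k ≤ n + 2)] at this
        linarith [this]
      linear_combination (-(bernoulli k : ℚ)) * h2
    rw [Finset.sum_congr rfl e, ← Finset.mul_sum, sum_bernoulli, if_neg (by omega : n + 1 ≠ 1), mul_zero]
  have T2 : ∑ k ∈ range (n + 1), ((n+2).choose k : ℚ) * bernoulli k
      = -(((n:ℚ)+2) * bernoulli (n+1)) := by
    have h := sum_bernoulli (n + 2)
    rw [Finset.sum_range_succ, if_neg (by omega : n + 2 ≠ 1)] at h
    have hc : ((n+2).choose (n+1) : ℚ) = (n:ℚ) + 2 := by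
      rw [Nat.choose_succ_self_right]
      push_cast; ring
    rw [hc] at h
    linarith [h]
  have S : ∑ k ∈ range (n + 1), ((n+2).choose k : ℚ) * bernoulli k * ((n : ℚ) + 1 - k)
      = ((n:ℚ)+2) * bernoulli (n+1) := by
    have : ∑ k ∈ range (n + 1), ((n+2).choose k : ℚ) * bernoulli k * ((n : ℚ) + 1 - k)
        = (∑ k ∈ range (n + 1), ((n+2).choose k : ℚ) * bernoulli k * ((n : ℚ) + 2 - k))
          - ∑ k ∈ range (n + 1), ((n+2).choose k : ℚ) * bernoulli k := by
      rw [← Finset.sum_sub_distrib]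
      apply Finset.sum_congr rfl
      intro k _; ring
    rw [this, T1, T2]; ring
  rw [S]
  field_simp
end

section
/- For every integer n ≥ 0, the following identity of polynomials in ℚ[X] holds: Σ_{k=0}^{n+1} C(n+1,k) · ((1 - (-1)^{n+1-k})/2) · B_{n+1+k}(X) = (1/2) · (n+1) · X^n · (X-1)^n · (2X - 1). -/
open Polynomial Finset

private lemma bern_symm (m : ℕ) :
    (Polynomial.bernoulli m).comp (1 - X) = (-1 : ℚ[X]) ^ m * Polynomial.bernoulli m := by
  induction m with
  | zero => simp
  | succ m ih =>
    have hzero : derivative ((Polynomial.bernoulli (m+1)).comp (1 - X)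
        - (-1 : ℚ[X])^(m+1) * Polynomial.bernoulli (m+1)) = 0 := by
      rw [derivative_sub, Polynomial.derivative_comp_one_sub_X,
        Polynomial.derivative_bernoulli_add_one]
      have hd1 : derivative ((-1 : ℚ[X])^(m+1)) = 0 := by
        simp [derivative_pow]
      rw [derivative_mul, hd1, Polynomial.derivative_bernoulli_add_one]
      simp only [Polynomial.mul_comp, Polynomial.natCast_comp, Polynomial.add_comp,
        Polynomial.one_comp, ih]
      ring
    have h := Polynomial.eq_C_of_derivative_eq_zero hzero
    rw [Polynomial.coeff_zero_eq_eval_zero] at h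
    have h0 : ((Polynomial.bernoulli (m+1)).comp (1 - X)
        - (-1 : ℚ[X])^(m+1) * Polynomial.bernoulli (m+1)).eval 0 = 0 := by
      simp [Polynomial.eval_comp, Polynomial.bernoulli_eval_one,
        Polynomial.bernoulli_eval_zero, ← bernoulli'_eq_bernoulli]
    rw [h0] at h
    exact sub_eq_zero.mp (by simpa using h)

private lemma bern_half {m : ℕ} (hm : Odd m) :
    (Polynomial.bernoulli m).eval (1/2 : ℚ) = 0 := by
  have h := congrArg (Polynomial.eval (1/2 : ℚ)) (bern_symm m)
  simp [Polynomial.eval_comp, hm.neg_one_pow] at h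
  norm_num at h
  linarith


/-- Theorem 1 of the paper: `K_n(X) = H_n(X)`, i.e.
`∑_{k=0}^{n+1} C(n+1,k) ((1-(-1)^{n+1-k})/2) B_{n+1+k}(X)
  = (1/2)(n+1) X^n (X-1)^n (2X-1)` in `ℚ[X]`. -/
theorem K_eq_H (n : ℕ) :
    ∑ k ∈ Finset.range (n + 2),
        C (((n + 1).choose k : ℚ) * ((1 - (-1 : ℚ) ^ (n + 1 - k)) / 2)) *
          Polynomial.bernoulli (n + 1 + k) =
      C ((1 : ℚ) / 2) * C ((n : ℚ) + 1) * X ^ n * (X - 1) ^ n * (2 * X - 1) := by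
  have key : ∀ c : ℕ → ℚ,
      (∀ k, c k = ((n + 1).choose k : ℚ) * ((1 - (-1 : ℚ) ^ (n + 1 - k)) / 2)) →
      ∑ k ∈ Finset.range (n + 2), C (c k) * Polynomial.bernoulli (n + 1 + k)
        = C ((1:ℚ)/2) * C ((n:ℚ)+1) * X ^ n * (X - 1) ^ n * (2 * X - 1) := by
    intro c hc
    set P : ℚ[X] := C ((1:ℚ)/2) * (X ^ (n+1) * (X - 1) ^ (n+1)) with hP
    set R : ℚ[X] := C ((1:ℚ)/2) * C ((n:ℚ)+1) * X ^ n * (X - 1) ^ n * (2 * X - 1) with hR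
    set S : ℚ[X] := ∑ k ∈ Finset.range (n + 2), C (c k) * Polynomial.bernoulli (n + 1 + k)
      with hS
    have step1 : derivative P = R := by
      rw [hP, hR]
      simp only [derivative_mul, derivative_pow, derivative_C, derivative_X, derivative_sub,
        derivative_one, Nat.add_sub_cancel, zero_mul, zero_add, mul_one, sub_zero]
      push_cast
      ring
    have step2 : P.comp (X + 1) = C ((1:ℚ)/2) * ((X+1)^(n+1) * X^(n+1)) := by
      rw [hP]
      simp [Polynomial.mul_comp, Polynomial.pow_comp, Polynomial.sub_comp, Polynomial.X_comp,
        Polynomial.C_comp, Polynomial.one_comp, add_sub_cancel_right]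
    have step3 : P.comp (X + 1) - P
        = ∑ k ∈ Finset.range (n+2), C (c k) * X ^ (n+1+k) := by
      rw [step2, hP]
      have e1 : ((X:ℚ[X]) + 1)^(n+1)
          = ∑ k ∈ Finset.range (n+2), (((n+1).choose k : ℚ[X])) * X ^ k := by
        rw [add_pow]
        exact Finset.sum_congr rfl fun k _ => by ring
      have e2 : ((X:ℚ[X]) - 1)^(n+1)
          = ∑ k ∈ Finset.range (n+2),
              (((n+1).choose k : ℚ[X])) * (-1 : ℚ[X])^(n+1-k) * X ^ k := by
        rw [sub_eq_add_neg, add_pow]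
        exact Finset.sum_congr rfl fun k _ => by ring
      rw [e1, e2]
      simp only [Finset.sum_mul, Finset.mul_sum]
      rw [← Finset.sum_sub_distrib]
      refine Finset.sum_congr rfl fun k hk => ?_
      have hck : C (c k)
          = C ((1:ℚ)/2) * (((n+1).choose k : ℚ[X])) * (1 - (-1 : ℚ[X])^(n+1-k)) := by
        have h1 : c k = 1/2 * (((n+1).choose k : ℚ)) * (1 - (-1:ℚ)^(n+1-k)) := by
          rw [hc]; ring
        rw [h1, map_mul, map_mul, map_sub, map_one, map_pow, map_neg, map_one,
          Polynomial.C_eq_natCast]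
      rw [hck]
      ring
    have step4 : R.comp (X + 1) - R
        = ∑ k ∈ Finset.range (n+2), C (c k * ((n:ℚ)+1+k)) * X ^ (n+k) := by
      calc R.comp (X + 1) - R = derivative (P.comp (X + 1) - P) := by
            rw [derivative_sub, Polynomial.derivative_comp, step1]; simp
        _ = ∑ k ∈ Finset.range (n+2), C (c k * ((n:ℚ)+1+k)) * X ^ (n+k) := by
            rw [step3, derivative_sum]
            refine Finset.sum_congr rfl fun k hk => ?_
            rw [derivative_mul, derivative_C, zero_mul, zero_add, derivative_X_pow,
              show n+1+k-1 = n+k by omega, map_mul]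
            push_cast
            ring
    have hSd : ∀ x : ℚ, S.eval (x + 1)
        = S.eval x + ∑ k ∈ Finset.range (n+2), c k * ((n:ℚ)+1+k) * x^(n+k) := by
      intro x
      rw [hS]
      simp only [Polynomial.eval_finset_sum, Polynomial.eval_mul, Polynomial.eval_C]
      rw [← Finset.sum_add_distrib]
      refine Finset.sum_congr rfl fun k hk => ?_
      rw [add_comm x 1, Polynomial.bernoulli_eval_one_add, show n+1+k-1 = n+k by omega]
      push_cast
      ring
    have hRd : ∀ x : ℚ, R.eval (x + 1)
        = R.eval x + ∑ k ∈ Finset.range (n+2), c k * ((n:ℚ)+1+k) * x^(n+k) := by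
      intro x
      have h := congrArg (Polynomial.eval x) step4
      rw [Polynomial.eval_sub, Polynomial.eval_comp] at h
      simp only [Polynomial.eval_finset_sum, Polynomial.eval_mul, Polynomial.eval_C,
        Polynomial.eval_pow, Polynomial.eval_X, Polynomial.eval_add, Polynomial.eval_one] at h
      exact sub_eq_iff_eq_add'.mp h
    have hper : ∀ x : ℚ, (S - R).eval (x + 1) = (S - R).eval x := by
      intro x
      rw [Polynomial.eval_sub, Polynomial.eval_sub, hSd, hRd]
      ring
    have h12 : (S - R).eval (1/2 : ℚ) = 0 := by
      rw [Polynomial.eval_sub]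
      have hS0 : S.eval (1/2 : ℚ) = 0 := by
        rw [hS, Polynomial.eval_finset_sum]
        apply Finset.sum_eq_zero
        intro k hk
        rw [Polynomial.eval_mul, Polynomial.eval_C]
        rcases Nat.even_or_odd (n + 1 - k) with he | ho
        · have hc0 : c k = 0 := by rw [hc, he.neg_one_pow]; ring
          rw [hc0, zero_mul]
        · have hk' : k ≤ n + 1 := by
            have := Finset.mem_range.mp hk; omega
          obtain ⟨j, hj⟩ := ho
          have hodd : Odd (n + 1 + k) := ⟨j + k, by omega⟩
          rw [bern_half hodd, mul_zero]
      have hR0 : R.eval (1/2 : ℚ) = 0 := by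
        rw [hR]; simp
      rw [hS0, hR0, sub_zero]
    have hroots : ∀ m : ℕ, (S - R).eval ((1/2 : ℚ) + m) = 0 := by
      intro m
      induction m with
      | zero => simpa using h12
      | succ m ih =>
        have h2 : ((1/2 : ℚ) + ((m:ℕ)+1 : ℕ)) = (1/2 + (m:ℚ)) + 1 := by push_cast; ring
        rw [h2, hper, ih]
    have hSR : S - R = 0 := by
      apply Polynomial.eq_zero_of_infinite_isRoot
      refine Set.infinite_of_injective_forall_mem (f := fun m : ℕ => (1/2 : ℚ) + m) ?_ ?_
      · intro a b hab
        simp only at hab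
        exact Nat.cast_injective (by linarith : ((a:ℕ):ℚ) = ((b:ℕ):ℚ))
      · intro m
        exact hroots m
    exact sub_eq_zero.mp hSR
  exact key _ (fun k => rfl)
end

section
/- For every odd integer q ≥ 1 and every integer n ≥ 1, Σ_{k=0}^{n+q} C(n+q,k) · (Π_{j=1}^{q} (n+k+j)) · B_{n+k} = 0, where C(a,b) denotes the binomial coefficient and the product Π_{j=1}^{q} (n+k+j) = (n+k+1)(n+k+2)⋯(n+k+q). -/
namespace ZBaux

open Polynomial Finset

/-- The Bernoulli umbral functional: `X^m ↦ bernoulli m`. -/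
noncomputable def L : ℚ[X] →ₗ[ℚ] ℚ :=
  Polynomial.lsum fun n => (_root_.bernoulli n) • LinearMap.id

lemma L_X_pow (m : ℕ) : L ((X : ℚ[X]) ^ m) = _root_.bernoulli m := by
  rw [← monomial_one_right_eq_X_pow]
  simp [L, Polynomial.lsum_apply, Polynomial.sum_monomial_index]

lemma full_sum (m : ℕ) :
    ∑ k ∈ range (m + 1), (m.choose k : ℚ) * _root_.bernoulli k
      = (-1) ^ m * _root_.bernoulli m := by
  rw [Finset.sum_range_succ, _root_.sum_bernoulli, Nat.choose_self]
  rcases eq_or_ne m 1 with rfl | hm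
  · norm_num [_root_.bernoulli_one]
  · rw [if_neg hm, zero_add, Nat.cast_one, one_mul]
    rcases Nat.even_or_odd m with he | ho
    · rw [he.neg_one_pow, one_mul]
    · have h1 : 1 < m := lt_of_le_of_ne ho.pos (Ne.symm hm)
      rw [bernoulli_eq_bernoulli'_of_ne_one hm, bernoulli'_eq_zero_of_odd ho h1, mul_zero]

lemma L_X_add_one_pow (m : ℕ) :
    L (((X : ℚ[X]) + 1) ^ m) = (-1) ^ m * _root_.bernoulli m := by
  rw [add_pow]
  have : ∀ k ∈ range (m + 1),
      (X : ℚ[X]) ^ k * 1 ^ (m - k) * (m.choose k : ℚ[X])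
        = ((m.choose k : ℚ)) • (X : ℚ[X]) ^ k := by
    intro k _
    rw [one_pow, mul_one, smul_eq_C_mul, C_eq_natCast]
    ring
  rw [Finset.sum_congr rfl this, map_sum]
  simp only [map_smul, L_X_pow, smul_eq_mul]
  exact full_sum m

lemma L_neg_X_pow (m : ℕ) :
    L ((-(X : ℚ[X])) ^ m) = (-1) ^ m * _root_.bernoulli m := by
  have h : (-(X : ℚ[X])) ^ m = ((-1 : ℚ) ^ m) • (X : ℚ[X]) ^ m := by
    rw [neg_pow, smul_eq_C_mul, map_pow, map_neg, map_one]
  rw [h, map_smul, L_X_pow, smul_eq_mul]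

lemma L_comp_X_add_one (p : ℚ[X]) : L (p.comp (X + 1)) = L (p.comp (-X)) := by
  induction p using Polynomial.induction_on' with
  | add p q hp hq => simp only [add_comp, map_add, hp, hq]
  | monomial n a =>
    rw [monomial_comp, monomial_comp, ← smul_eq_C_mul, ← smul_eq_C_mul,
      map_smul, map_smul, L_X_add_one_pow, L_neg_X_pow]

lemma L_comp_refl (p : ℚ[X]) : L (p.comp (-1 - X)) = L p := by
  have h := L_comp_X_add_one (p.comp (-X))
  rw [comp_assoc, comp_assoc] at h
  have h1 : ((-X : ℚ[X])).comp (X + 1) = -1 - X := by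
    rw [neg_comp, X_comp]; ring
  have h2 : ((-X : ℚ[X])).comp (-X) = X := by
    rw [neg_comp, X_comp, neg_neg]
  rw [h1, h2, comp_X] at h
  exact h

lemma iterate_derivative_comp_refl (k : ℕ) (p : ℚ[X]) :
    derivative^[k] (p.comp (-1 - X)) = (-1) ^ k * (derivative^[k] p).comp (-1 - X) := by
  induction k generalizing p with
  | zero => simp
  | succ k ih =>
    rw [Function.iterate_succ_apply, Function.iterate_succ_apply, derivative_comp]
    have hσ : derivative ((-1 : ℚ[X]) - X) = -1 := by simp
    rw [hσ, neg_one_mul, ← neg_comp, ih, iterate_derivative_neg, neg_comp, pow_succ]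
    ring

lemma iterate_derivative_sum {ι : Type*} (s : Finset ι) (f : ι → ℚ[X]) (k : ℕ) :
    derivative^[k] (∑ i ∈ s, f i) = ∑ i ∈ s, derivative^[k] (f i) := by
  induction k with
  | zero => simp
  | succ k ih =>
    rw [Function.iterate_succ_apply', ih, map_sum]
    simp [Function.iterate_succ_apply']

lemma descFactorial_eq_prod (q m : ℕ) :
    (((m + q).descFactorial q : ℕ) : ℚ) = ∏ j ∈ Icc 1 q, ((m : ℚ) + j) := by
  induction q with
  | zero => simp
  | succ q ih =>
    rw [Finset.prod_Icc_succ_top (Nat.one_le_iff_ne_zero.mpr (Nat.succ_ne_zero q)), ← ih,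
      show m + (q + 1) = (m + q) + 1 by ring, Nat.succ_descFactorial_succ]
    push_cast
    ring

theorem main (q n : ℕ) (hq : Odd q) (hn : 1 ≤ n) :
    ∑ k ∈ Finset.range (n + q + 1),
        ((n + q).choose k : ℚ) * (∏ j ∈ Finset.Icc 1 q, ((n : ℚ) + k + j)) *
          _root_.bernoulli (n + k) = 0 := by
  classical
  set N := n + q with hN
  set f : ℚ[X] := (X * (X + 1)) ^ N with hf
  set g : ℚ[X] := derivative^[q] f with hg
  -- symmetry of f under x ↦ -1 - x
  have hfs : f.comp (-1 - X) = f := by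
    rw [hf, pow_comp, mul_comp, X_comp, add_comp, X_comp, one_comp]
    congr 1
    ring
  -- hence g ∘ (-1-x) = -g since q is odd
  have hgs : g.comp (-1 - X) = -g := by
    have h := iterate_derivative_comp_refl q f
    rw [hfs, hq.neg_one_pow, neg_one_mul, ← hg] at h
    exact neg_eq_iff_eq_neg.mp h.symm
  -- therefore L g = 0
  have hLg : L g = 0 := by
    have h := L_comp_refl g
    rw [hgs, map_neg] at h
    linarith
  -- expand f as a sum of monomials
  have hfe : f = ∑ k ∈ Finset.range (N + 1), ((N.choose k : ℚ)) • (X : ℚ[X]) ^ (N + k) := by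
    rw [hf, mul_pow, add_pow, Finset.mul_sum]
    refine Finset.sum_congr rfl fun k _ => ?_
    rw [one_pow, mul_one, smul_eq_C_mul, C_eq_natCast, pow_add]
    ring
  -- compute g
  have hge : g = ∑ k ∈ Finset.range (N + 1),
      (((N.choose k : ℚ)) * (((N + k).descFactorial q : ℕ) : ℚ)) • (X : ℚ[X]) ^ (n + k) := by
    rw [hg, hfe, iterate_derivative_sum]
    refine Finset.sum_congr rfl fun k _ => ?_
    rw [iterate_derivative_smul, iterate_derivative_X_pow_eq_smul, smul_smul]
    congr 2
    omega
  -- compute L g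
  have hLge : L g = ∑ k ∈ Finset.range (N + 1),
      ((N.choose k : ℚ)) * (((N + k).descFactorial q : ℕ) : ℚ) * _root_.bernoulli (n + k) := by
    rw [hge, map_sum]
    simp [L_X_pow]
  rw [hLge] at hLg
  rw [← hLg]
  refine Finset.sum_congr rfl fun k _ => ?_
  have hdesc : (((N + k).descFactorial q : ℕ) : ℚ)
      = ∏ j ∈ Finset.Icc 1 q, ((n : ℚ) + k + j) := by
    have h := descFactorial_eq_prod q (n + k)
    rw [show n + k + q = N + k by omega] at h
    rw [h]
    refine Finset.prod_congr rfl fun j _ => ?_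
    push_cast
    ring
  rw [hdesc, hN]

end ZBaux

/-- Theorem 2 of the paper (Pearl 3): for odd `q ≥ 1` and `n ≥ 1`,
`∑_{k=0}^{n+q} C(n+q,k) (∏_{j=1}^{q} (n+k+j)) B_{n+k} = 0`. -/
theorem zekiri_bencherif_identity (q n : ℕ) (hq : Odd q) (hq1 : 1 ≤ q) (hn : 1 ≤ n) :
    ∑ k ∈ Finset.range (n + q + 1),
        ((n + q).choose k : ℚ) * (∏ j ∈ Finset.Icc 1 q, ((n : ℚ) + k + j)) *
          bernoulli (n + k) = 0 :=
  ZBaux.main q n hq hn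
end
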